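/- There exist constants C, d > 0 such that for all integers n ≥ 2 and all even integers m ≥ 2, the one-sided error randomized query complexity satisfies R1(g_{n,m}) ≤ C·(n+m)·(log₂(n+m))^d. -/

import Mathlib

open Classical
open scoped ENNReal

set_option maxHeartbeats 1000000

/-! ### Deterministic decision trees -/

inductive DTree (ι σ : Type) : Type
  | leaf (b : Bool) : DTree ι σ
  | node (v : ι) (child : σ → DTree ι σ) : DTree ι σ

namespace DTree

variable {ι σ : Type}

/-- The output of the decision tree on input `x`. -/
def eval (x : ι → σ) : DTree ι σ → Bool
  | leaf b => b
  | node v child => (child (x v)).eval x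

/-- The list of variables queried by the decision tree on input `x`,
in the order they are queried. -/
def queryList (x : ι → σ) : DTree ι σ → List ι
  | leaf _ => []
  | node v child => v :: (child (x v)).queryList x

/-- The cost of the decision tree on input `x`: the number of internal nodes visited. -/
def cost (T : DTree ι σ) (x : ι → σ) : ℕ := (T.queryList x).length

/-- `T` computes `f` if it outputs `f x` on every input `x`. -/
def Computes (T : DTree ι σ) (f : (ι → σ) → Bool) : Prop := ∀ x, T.eval x = f x

end DTree

/-- Deterministic query complexity. -/
noncomputable def detComplexity {ι σ : Type} (f : (ι → σ) → Bool) : ℕ :=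
  sInf {d : ℕ | ∃ T : DTree ι σ, T.Computes f ∧ ∀ x, T.cost x ≤ d}

/-- Expected cost of a randomized decision tree (a distribution over deterministic
decision trees) on input `x`. -/
noncomputable def expCost {ι σ : Type} (μ : PMF (DTree ι σ)) (x : ι → σ) : ℝ≥0∞ :=
  ∑' T : DTree ι σ, μ T * (T.cost x : ℝ≥0∞)

/-- Zero-error (Las Vegas) randomized query complexity. -/
noncomputable def R0query {ι σ : Type} (f : (ι → σ) → Bool) : ℝ≥0∞ :=
  ⨅ μ ∈ {μ : PMF (DTree ι σ) | ∀ T ∈ μ.support, T.Computes f},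
    ⨆ x : ι → σ, expCost μ x

/-- One-sided error randomized query complexity. -/
noncomputable def R1query {ι σ : Type} (f : (ι → σ) → Bool) : ℝ≥0∞ :=
  ⨅ μ ∈ {μ : PMF (DTree ι σ) |
      (∀ x, f x = false → ∀ T ∈ μ.support, T.eval x = false) ∧
      (∀ x, f x = true → 1 / 2 ≤ ∑' T : DTree ι σ, if T.eval x = true then μ T else 0)},
    ⨆ x : ι → σ, expCost μ x

/-- Bounded-error (Monte Carlo) randomized query complexity. -/
noncomputable def Rquery {ι σ : Type} (f : (ι → σ) → Bool) : ℝ≥0∞ :=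
  ⨅ μ ∈ {μ : PMF (DTree ι σ) |
      ∀ x, 9 / 10 ≤ ∑' T : DTree ι σ, if T.eval x = f x then μ T else 0},
    ⨆ x : ι → σ, expCost μ x
/-! ### Quantum query algorithms -/

/-- The standard quantum query oracle `O_x |j,p⟩|w⟩ = |j, p + x_j mod S⟩|w⟩`,
as a matrix. -/
noncomputable def qOracle {V ω : Type} [DecidableEq V] [DecidableEq ω] {S : ℕ}
    (x : V → Fin S) : Matrix (V × Fin S × ω) (V × Fin S × ω) ℂ :=
  fun r c => if r = (c.1, c.2.1 + x c.1, c.2.2) then 1 else 0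

/-- A quantum query algorithm on inputs `x : V → Fin S`, making `queries` queries, with
workspace `Fin (W+1)`, alternating the unitaries `U 0, …, U queries` with the oracle,
and measuring with the projector `P` at the end. -/
structure QAlg (V : Type) [Fintype V] [DecidableEq V] (S : ℕ) [NeZero S] where
  queries : ℕ
  W : ℕ
  init : V
  U : ℕ → Matrix (V × Fin S × Fin (W + 1)) (V × Fin S × Fin (W + 1)) ℂ
  hU : ∀ t, (U t).conjTranspose * U t = 1 ∧ U t * (U t).conjTranspose = 1
  P : Matrix (V × Fin S × Fin (W + 1)) (V × Fin S × Fin (W + 1)) ℂ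
  hP : P.conjTranspose = P ∧ P * P = P

namespace QAlg

variable {V : Type} [Fintype V] [DecidableEq V] {S : ℕ} [NeZero S]

/-- The state of the quantum algorithm after `t` steps on input `x`. -/
noncomputable def state (A : QAlg V S) (x : V → Fin S) :
    ℕ → (V × Fin S × Fin (A.W + 1) → ℂ)
  | 0 => (A.U 0).mulVec fun r => if r = (A.init, 0, 0) then 1 else 0
  | t + 1 => (A.U (t + 1)).mulVec ((qOracle x).mulVec (A.state x t))

/-- The probability that the algorithm accepts input `x`: `‖P |Ψ_x⟩‖²`. -/
noncomputable def acceptProb (A : QAlg V S) (x : V → Fin S) : ℝ :=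
  ∑ r : V × Fin S × Fin (A.W + 1), Complex.normSq (A.P.mulVec (A.state x A.queries) r)

end QAlg

/-- Bounded-error quantum query complexity (for functions over a finite input
alphabet `σ`, identified with `Fin (card σ)` via a fixed bijection). -/
noncomputable def Qquery {V σ : Type} [Fintype V] [DecidableEq V] [Fintype σ] [Nonempty σ]
    (f : (V → σ) → Bool) : ℕ :=
  letI : NeZero (Fintype.card σ) := ⟨Fintype.card_ne_zero⟩
  sInf {t : ℕ | ∃ A : QAlg V (Fintype.card σ), A.queries = t ∧
    ∀ x : V → σ,
      (f x = true → 9 / 10 ≤ A.acceptProb fun j => Fintype.equivFin σ (x j)) ∧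
      (f x = false → A.acceptProb (fun j => Fintype.equivFin σ (x j)) ≤ 1 / 10)}

/-- Exact quantum query complexity. -/
noncomputable def QEquery {V σ : Type} [Fintype V] [DecidableEq V] [Fintype σ] [Nonempty σ]
    (f : (V → σ) → Bool) : ℕ :=
  letI : NeZero (Fintype.card σ) := ⟨Fintype.card_ne_zero⟩
  sInf {t : ℕ | ∃ A : QAlg V (Fintype.card σ), A.queries = t ∧
    ∀ x : V → σ,
      (f x = true → A.acceptProb (fun j => Fintype.equivFin σ (x j)) = 1) ∧
      (f x = false → A.acceptProb (fun j => Fintype.equivFin σ (x j)) = 0)}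

/-- Approximate degree of a boolean function. -/
noncomputable def adeg {ι : Type} (F : (ι → Bool) → Bool) : ℕ :=
  sInf {d : ℕ | ∃ p : MvPolynomial ι ℝ, p.totalDegree ≤ d ∧
    ∀ y : ι → Bool, |MvPolynomial.eval (fun i => if y i then (1 : ℝ) else 0) p -
      (if F y then 1 else 0)| ≤ 1 / 10}
/-! ### The pointer functions of Göös–Pitassi–Watson type -/

/-- A symbol of the input alphabet: a boolean value, a left pointer, a right pointer,
and a back/internal pointer (to a cell or a column, depending on `β`). -/
structure PSym (n m : ℕ) (β : Type) where
  val : Bool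
  lp : Option (Fin n × Fin m)
  rp : Option (Fin n × Fin m)
  bp : Option β
deriving DecidableEq

/-- The all-ones symbol `(1,⊥,⊥,⊥)`. -/
def PSym.one (n m : ℕ) (β : Type) : PSym n m β := ⟨true, none, none, none⟩

/-- The symbol `(0,⊥,⊥,⊥)`. -/
def PSym.zero (n m : ℕ) (β : Type) : PSym n m β := ⟨false, none, none, none⟩

def PSym.equivProd (n m : ℕ) (β : Type) :
    PSym n m β ≃ Bool × Option (Fin n × Fin m) × Option (Fin n × Fin m) × Option β where
  toFun v := (v.val, v.lp, v.rp, v.bp)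
  invFun p := ⟨p.1, p.2.1, p.2.2.1, p.2.2.2⟩
  left_inv _ := rfl
  right_inv _ := rfl

instance {n m : ℕ} {β : Type} [Fintype β] : Fintype (PSym n m β) :=
  Fintype.ofEquiv _ (PSym.equivProd n m β).symm

instance {n m : ℕ} {β : Type} : Nonempty (PSym n m β) := ⟨PSym.one n m β⟩

/-- The sequence of k bits of `j`, most significant first:  the root-to-leaf path
(`false` = left, `true` = right) of the `j`-th leaf in the complete binary tree of depth `k`. -/
def bitsPath (k j : ℕ) : List Bool :=
  ((List.range k).reverse).map fun i => j.testBit i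

/-- The root-to-leaf path of the leaf labeled `j` (0-indexed) in the balanced binary tree
with `m` leaves: the complete binary tree if `m` is a power of 2, and otherwise the complete
binary tree on `2 ^ ⌊log₂ m⌋` leaves with a pair of children added to each of the
`m - 2 ^ ⌊log₂ m⌋` leftmost leaves. -/
def treePath (m j : ℕ) : List Bool :=
  if m - 2 ^ Nat.log 2 m = 0 then bitsPath (Nat.log 2 m) j
  else if j < 2 * (m - 2 ^ Nat.log 2 m) then
    bitsPath (Nat.log 2 m) (j / 2) ++ [j % 2 == 1]
  else bitsPath (Nat.log 2 m) (j - (m - 2 ^ Nat.log 2 m))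

/-- Starting at cell `a` and following the left/right pointers of `x` as prescribed by the
list `p` of moves (`false` = left pointer, `true` = right pointer); returns `none` if a
null pointer is encountered. -/
def followPath {n m : ℕ} {β : Type} (x : Fin n × Fin m → PSym n m β)
    (a : Fin n × Fin m) (p : List Bool) : Option (Fin n × Fin m) :=
  p.foldl (fun acc b => acc.bind fun c => if b then (x c).rp else (x c).lp) (some a)

/-- The conditions for `x` to be a 1-input of `f_{n,m}`, with marked column `b` and special
element `a`: (1) `b` is the unique all-1 column; (2) `a` is the unique cell of column `b`
with `x_a ≠ (1,⊥,⊥,⊥)`; (3) for every column `j ≠ b` the tree path from `a` to the leaf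
labeled `j` exists, and ends at a cell `ℓ_j` of column `j` holding a 0; (4) the back pointer
of each `ℓ_j` points to the column `b`. -/
def fCond (n m : ℕ) (x : Fin n × Fin m → PSym n m (Fin m))
    (b : Fin m) (a : Fin n × Fin m) : Prop :=
  (∀ j : Fin m, (∀ i : Fin n, (x (i, j)).val = true) ↔ j = b) ∧
  a.2 = b ∧
  (∀ i : Fin n, x (i, b) ≠ PSym.one n m (Fin m) ↔ (i, b) = a) ∧
  ∀ j : Fin m, j ≠ b →
    ∃ ℓ : Fin n × Fin m, followPath x a (treePath m j.1) = some ℓ ∧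
      ℓ.2 = j ∧ (x ℓ).val = false ∧ (x ℓ).bp = some b

/-- The pointer function `f_{n,m}`, with back pointers to the marked column. -/
noncomputable def fFun (n m : ℕ) (x : Fin n × Fin m → PSym n m (Fin m)) : Bool :=
  if ∃ b a, fCond n m x b a then true else false

/-- The conditions for `x` to be a 1-input of `g_{n,m}`, with marked column `b` and special
element `a`: (1)–(3) as for `f_{n,m}`, and (4′) the set of columns `j ≠ b` whose highlighted
zero `ℓ_j` has back pointer to `a` has size exactly `m/2`. -/
def gCond (n m : ℕ) (x : Fin n × Fin m → PSym n m (Fin n × Fin m))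
    (b : Fin m) (a : Fin n × Fin m) : Prop :=
  (∀ j : Fin m, (∀ i : Fin n, (x (i, j)).val = true) ↔ j = b) ∧
  a.2 = b ∧
  (∀ i : Fin n, x (i, b) ≠ PSym.one n m (Fin n × Fin m) ↔ (i, b) = a) ∧
  (∀ j : Fin m, j ≠ b →
    ∃ ℓ : Fin n × Fin m, followPath x a (treePath m j.1) = some ℓ ∧
      ℓ.2 = j ∧ (x ℓ).val = false) ∧
  {j : Fin m | j ≠ b ∧ ∃ ℓ : Fin n × Fin m,
      followPath x a (treePath m j.1) = some ℓ ∧ (x ℓ).bp = some a}.ncard = m / 2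

/-- The pointer function `g_{n,m}`, where exactly `m/2` of the highlighted zeroes point
back to the special element. -/
noncomputable def gFun (n m : ℕ) (x : Fin n × Fin m → PSym n m (Fin n × Fin m)) : Bool :=
  if ∃ b a, gCond n m x b a then true else false

/-- Column `j` is good in `x` (for `g_{n,m}`): `x` is a 1-input with marked column `b ≠ j`
and special element `a`, and the highlighted zero of column `j` points back to `a`. -/
def goodColumn (n m : ℕ) (x : Fin n × Fin m → PSym n m (Fin n × Fin m)) (j : Fin m) : Prop :=
  ∃ b a, gCond n m x b a ∧ j ≠ b ∧
    ∃ ℓ : Fin n × Fin m, followPath x a (treePath m j.1) = some ℓ ∧ (x ℓ).bp = some a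

/-- The conditions for `x` to be a 1-input of `h_{k,n,m}`, with marked columns `b 0,…,b (k-1)`
and special elements `a 0,…,a (k-1)`: (1) the `b s` are exactly the all-1 columns; (2) `a s` is
the unique cell of column `b s` with `x_{a s} ≠ (1,⊥,⊥,⊥)`; (3) the internal pointers of the
`a s` form a cycle and all the `a s` have equal left pointers and equal right pointers;
(4) for every non-marked column `j` the tree path from any `a s` to the leaf labeled `j`
exists and ends at a cell `ℓ_j` of column `j` holding a 0. -/
def hCond (k n m : ℕ) (x : Fin n × Fin m → PSym n m (Fin n × Fin m))
    (b : Fin k → Fin m) (a : Fin k → Fin n × Fin m) : Prop :=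
  Function.Injective b ∧
  (∀ j : Fin m, (∀ i : Fin n, (x (i, j)).val = true) ↔ ∃ s, b s = j) ∧
  (∀ s, (a s).2 = b s) ∧
  (∀ s, ∀ i : Fin n, x (i, b s) ≠ PSym.one n m (Fin n × Fin m) ↔ (i, b s) = a s) ∧
  (∀ s : Fin k, (x (a s)).bp = some (a ⟨(s.1 + 1) % k, Nat.mod_lt _ s.pos⟩)) ∧
  (∀ s t : Fin k, (x (a s)).lp = (x (a t)).lp ∧ (x (a s)).rp = (x (a t)).rp) ∧
  ∀ j : Fin m, (∀ s, b s ≠ j) → ∀ s : Fin k,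
    ∃ ℓ : Fin n × Fin m, followPath x (a s) (treePath m j.1) = some ℓ ∧
      ℓ.2 = j ∧ (x ℓ).val = false

/-- The pointer function `h_{k,n,m}` with `k` marked columns and no back pointers. -/
noncomputable def hFun (k n m : ℕ) (x : Fin n × Fin m → PSym n m (Fin n × Fin m)) : Bool :=
  if ∃ b a, hCond k n m x b a then true else false

/-- The hard input `x^ℓ`: cell `(i,j)` holds `(0,⊥,⊥,⊥)` if `i = ℓ j` and `(1,⊥,⊥,⊥)`
otherwise. -/
def xhard (n m : ℕ) (β : Type) (ℓ : Fin m → Fin n) : Fin n × Fin m → PSym n m β :=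
  fun c => if c.1 = ℓ c.2 then PSym.zero n m β else PSym.one n m β

/-- The set of (distinct) cells queried among the first `t` queries of `T` on input `x`. -/
def queriedUpTo {ι σ : Type} [DecidableEq ι] (T : DTree ι σ) (x : ι → σ) (t : ℕ) :
    Finset ι :=
  ((T.queryList x).take t).toFinset
/-! ### The progress measure for the hard distribution `x^ℓ` -/

/-- Column `j` is compromised (for the input `x^ℓ`), given the set `Q` of queried cells:
the zero cell `(ℓ j, j)` has been queried, or more than `n/2` cells of column `j` have been
queried. -/
def compromisedCol (n m : ℕ) (ℓ : Fin m → Fin n) (Q : Finset (Fin n × Fin m))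
    (j : Fin m) : Prop :=
  (ℓ j, j) ∈ Q ∨ n < 2 * (Q.filter fun c => c.2 = j).card

/-- The progress measure `I_t = A_t + (2/n)·B_t` of the decision tree `T` on the input `x^ℓ`
after `t` queries, where `A_t` is the number of compromised columns and `B_t` is the number
of queried cells lying outside compromised columns. -/
noncomputable def Imeasure (n m : ℕ)
    (T : DTree (Fin n × Fin m) (PSym n m (Fin n × Fin m))) (ℓ : Fin m → Fin n) (t : ℕ) : ℝ :=
  ({j : Fin m |
      compromisedCol n m ℓ (queriedUpTo T (xhard n m (Fin n × Fin m) ℓ) t) j}.ncard : ℝ) +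
    (2 / n) * ({c : Fin n × Fin m | c ∈ queriedUpTo T (xhard n m (Fin n × Fin m) ℓ) t ∧
      ¬ compromisedCol n m ℓ (queriedUpTo T (xhard n m (Fin n × Fin m) ℓ) t) c.2}.ncard : ℝ)
/-! ### The balanced binary tree, via root-to-node paths -/

/-- The node set of the balanced binary tree with `m` leaves: each node is identified with
the left/right path from the root to it, so the nodes are exactly the prefixes of the
root-to-leaf paths. -/
def treeNodes (m : ℕ) : Finset (List Bool) :=
  (Finset.range m).biUnion fun j => (treePath m j).inits.toFinset

/-- The leaves of the balanced binary tree with `m` leaves. -/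
def leafNodes (m : ℕ) : Finset (List Bool) :=
  (Finset.range m).image fun j => treePath m j

/-- The internal nodes of the balanced binary tree with `m` leaves. -/
def internalNodes (m : ℕ) : Finset (List Bool) :=
  treeNodes m \ leafNodes m

/-- The subtree rooted at a node `u`: all nodes of which `u` is a prefix. -/
def subtreeOf (m : ℕ) (u : List Bool) : Finset (List Bool) :=
  (treeNodes m).filter fun w => u <+: w

/-! ### The hard distribution for `h_{1,n,m}` -/

/-- A parameter quadruple `(v, π, ℓᴸ, ℓᴺ)` for the hard distribution: a bit `v`, a map `π`
from internal tree nodes to columns, and row maps `ℓᴸ, ℓᴺ` for leaves resp. internal nodes. -/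
abbrev HardQ (n m : ℕ) : Type :=
  Bool × ({u : List Bool // u ∈ internalNodes m} → Fin m) × (Fin m → Fin n) × (Fin m → Fin n)

/-- The valid parameter quadruples: `π` injective and `ℓᴸ j ≠ ℓᴺ j` for all `j`. -/
noncomputable def hardSet (n m : ℕ) : Finset (HardQ n m) :=
  Finset.univ.filter fun q => Function.Injective q.2.1 ∧ ∀ j, q.2.2.1 j ≠ q.2.2.2 j

/-- The column of the root of the tree (`none` if the tree has no internal node). -/
noncomputable def rootCol (n m : ℕ) (q : HardQ n m) : Option (Fin m) :=
  if h : ([] : List Bool) ∈ internalNodes m then some (q.2.1 ⟨[], h⟩) else none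

/-- The cell where a child node `w` of an internal node is placed: internal nodes go to
cell `(ℓᴺ (π w), π w)`, the leaf labeled `j` goes to cell `(ℓᴸ j, j)`, and the removed leaf
(the one labeled by the root's column) yields a null pointer. -/
noncomputable def childCell (n m : ℕ) (q : HardQ n m) (w : List Bool) :
    Option (Fin n × Fin m) :=
  if h : w ∈ internalNodes m then some (q.2.2.2 (q.2.1 ⟨w, h⟩), q.2.1 ⟨w, h⟩)
  else if h2 : ∃ j : Fin m, w = treePath m j.1 ∧ some j ≠ rootCol n m q then
    some (q.2.2.1 (Classical.choose h2), Classical.choose h2)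
  else none

/-- The input of the hard distribution determined by the parameter quadruple `q`:
the internal node `u` of the tree is placed at cell `(ℓᴺ (π u), π u)` with left and right
pointers to the cells of its children, value `v` and a self-loop internal pointer if `u` is
the root, and value 0 otherwise; for `j ≠ π(root)`, the leaf labeled `j` is placed at cell
`(ℓᴸ j, j)` with value 0 and null pointers; all the remaining cells hold `(1,⊥,⊥,⊥)`. -/
noncomputable def hardInput (n m : ℕ) (q : HardQ n m) :
    Fin n × Fin m → PSym n m (Fin n × Fin m) :=
  fun c =>
    if h : ∃ u : {u : List Bool // u ∈ internalNodes m}, q.2.1 u = c.2 ∧ q.2.2.2 c.2 = c.1 then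
      { val := if (Classical.choose h).1 = [] then q.1 else false
        lp := childCell n m q ((Classical.choose h).1 ++ [false])
        rp := childCell n m q ((Classical.choose h).1 ++ [true])
        bp := if (Classical.choose h).1 = [] then some c else none }
    else if some c.2 ≠ rootCol n m q ∧ c.1 = q.2.2.1 c.2 then PSym.zero n m (Fin n × Fin m)
    else PSym.one n m (Fin n × Fin m)

/-- Column `j` directly satisfies (i) or (ii): one of the cells `(ℓᴸ j, j)`, `(ℓᴺ j, j)` has
been queried, or more than half of the cells of column `j` have been queried. -/
def colBad (n m : ℕ) (q : HardQ n m) (Q : Finset (Fin n × Fin m)) (j : Fin m) : Prop :=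
  (q.2.2.1 j, j) ∈ Q ∨ (q.2.2.2 j, j) ∈ Q ∨ n < 2 * (Q.filter fun c => c.2 = j).card

/-- Column `j` is compromised: it satisfies (i) or (ii), or some ancestor `u` of `π⁻¹(j)`
in the tree is such that column `π u` satisfies (i) or (ii). -/
def compromisedCol19 (n m : ℕ) (q : HardQ n m) (Q : Finset (Fin n × Fin m))
    (j : Fin m) : Prop :=
  colBad n m q Q j ∨
  ∃ w u : {u : List Bool // u ∈ internalNodes m}, q.2.1 w = j ∧
    u.1 <+: w.1 ∧ u.1 ≠ w.1 ∧ colBad n m q Q (q.2.1 u)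

/-- The progress measure `I_t = min{A_t + (4·C0·log₂ m / n)·B_t, m/2}` of the decision tree
`D` on the hard-distribution input given by `q` after `t` queries, where `A_t` is the number
of compromised columns and `B_t` the number of queried cells outside compromised columns. -/
noncomputable def Imeasure19 (n m : ℕ) (C0 : ℝ)
    (D : DTree (Fin n × Fin m) (PSym n m (Fin n × Fin m))) (q : HardQ n m) (t : ℕ) : ℝ :=
  min
    (({j : Fin m | compromisedCol19 n m q (queriedUpTo D (hardInput n m q) t) j}.ncard : ℝ) +
      (4 * C0 * Real.logb 2 m / n) *
        ({c : Fin n × Fin m | c ∈ queriedUpTo D (hardInput n m q) t ∧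
          ¬ compromisedCol19 n m q (queriedUpTo D (hardInput n m q) t) c.2}.ncard : ℝ))
    (m / 2)
/-! ### Auxiliary: query programs -/

section ProgDev

variable {n m : ℕ}

/-- Cells of the grid. -/
abbrev GCell (n m : ℕ) := Fin n × Fin m

/-- Symbols for `g`. -/
abbrev GSym (n m : ℕ) := PSym n m (Fin n × Fin m)

/-- A query program returning a value of type `α`. -/
inductive Prog (n m : ℕ) (α : Type) : Type
  | ret (a : α) : Prog n m α
  | ask (v : GCell n m) (k : GSym n m → Prog n m α) : Prog n m α

namespace Prog

def bind {α β : Type} : Prog n m α → (α → Prog n m β) → Prog n m β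
  | ret a, f => f a
  | ask v k, f => ask v fun s => (k s).bind f

def run {α : Type} (x : GCell n m → GSym n m) : Prog n m α → α
  | ret a => a
  | ask v k => (k (x v)).run x

def pcost {α : Type} (x : GCell n m → GSym n m) : Prog n m α → ℕ
  | ret _ => 0
  | ask v k => (k (x v)).pcost x + 1

@[simp] lemma run_ret {α : Type} (x) (a : α) : (ret (n := n) (m := m) a).run x = a := rfl

@[simp] lemma run_ask {α : Type} (x) (v) (k : GSym n m → Prog n m α) :
    (ask v k).run x = (k (x v)).run x := rfl

@[simp] lemma run_bind {α β : Type} (x) (p : Prog n m α) (f : α → Prog n m β) :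
    (p.bind f).run x = (f (p.run x)).run x := by
  induction p with
  | ret a => rfl
  | ask v k ih => simp [bind, run, ih]

@[simp] lemma pcost_ret {α : Type} (x) (a : α) : (ret (n := n) (m := m) a).pcost x = 0 := rfl

@[simp] lemma pcost_bind {α β : Type} (x) (p : Prog n m α) (f : α → Prog n m β) :
    (p.bind f).pcost x = p.pcost x + (f (p.run x)).pcost x := by
  induction p with
  | ret a => simp [bind, pcost]
  | ask v k ih => simp [bind, pcost, run, ih]; omega

/-- Compile a boolean program to a decision tree. -/
def toTree : Prog n m Bool → DTree (GCell n m) (GSym n m)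
  | ret b => DTree.leaf b
  | ask v k => DTree.node v fun s => (k s).toTree

@[simp] lemma eval_toTree (p : Prog n m Bool) (x) : p.toTree.eval x = p.run x := by
  induction p with
  | ret b => rfl
  | ask v k ih => simp [toTree, DTree.eval, run, ih]

@[simp] lemma cost_toTree (p : Prog n m Bool) (x) : p.toTree.cost x = p.pcost x := by
  induction p with
  | ret b => rfl
  | ask v k ih =>
      show (DTree.queryList x _).length = _
      simp only [toTree, DTree.queryList, List.length_cons, pcost]
      exact congrArg (· + 1) (ih (x v))

/-- Sequence a program over a list. -/
def listM {α β : Type} (f : α → Prog n m β) : List α → Prog n m (List β)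
  | [] => ret []
  | a :: t => (f a).bind fun b => (listM f t).bind fun bs => ret (b :: bs)

@[simp] lemma run_listM {α β : Type} (x) (f : α → Prog n m β) (l : List α) :
    (listM f l).run x = l.map fun a => (f a).run x := by
  induction l with
  | nil => rfl
  | cons a t ih => simp [listM, ih]

lemma pcost_listM_le {α β : Type} (x) (f : α → Prog n m β) (l : List α) (K : ℕ)
    (h : ∀ a ∈ l, (f a).pcost x ≤ K) : (listM f l).pcost x ≤ l.length * K := by
  induction l with
  | nil => simp [listM]
  | cons a t ih =>
      simp only [listM, pcost_bind, pcost_ret, List.length_cons]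
      have h1 := h a (by simp)
      have h2 := ih fun a ha => h a (by simp [ha])
      calc (f a).pcost x + ((listM f t).pcost x + 0) ≤ K + t.length * K := by omega
        _ = (t.length + 1) * K := by ring

/-- Fold a program over a list. -/
def foldM {α β : Type} (f : β → α → Prog n m β) : List α → β → Prog n m β
  | [], b => ret b
  | a :: t, b => (f b a).bind fun b' => foldM f t b'

@[simp] lemma run_foldM {α β : Type} (x) (f : β → α → Prog n m β) (l : List α) (b : β) :
    (foldM f l b).run x = l.foldl (fun b a => (f b a).run x) b := by
  induction l generalizing b with
  | nil => rfl
  | cons a t ih => simp [foldM, ih]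

lemma pcost_foldM_le {α β : Type} (x) (f : β → α → Prog n m β) (l : List α) (K : ℕ)
    (h : ∀ b a, a ∈ l → (f b a).pcost x ≤ K) :
    ∀ b, (foldM f l b).pcost x ≤ l.length * K := by
  induction l with
  | nil => intro b; simp [foldM]
  | cons a t ih =>
      intro b
      simp only [foldM, pcost_bind, List.length_cons]
      have h1 := h b a (by simp)
      have h2 := ih (fun b a ha => h b a (by simp [ha])) (((f b a).run x))
      calc (f b a).pcost x + (foldM f t ((f b a).run x)).pcost x ≤ K + t.length * K := by omega
        _ = (t.length + 1) * K := by ring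

end Prog

end ProgDev

/-! ### The one-sided error algorithm for `g` -/

namespace GAlg

variable {n m : ℕ}

/-- Follow a pointer path, as a program. -/
def fpP : GCell n m → List Bool → Prog n m (Option (GCell n m))
  | c, [] => .ret (some c)
  | c, b :: t => .ask c fun s =>
      match (if b then s.rp else s.lp) with
      | none => .ret none
      | some c' => fpP c' t

lemma followPath_none (x : GCell n m → GSym n m) (p : List Bool) :
    p.foldl (fun acc b => acc.bind fun c => if b then (x c).rp else (x c).lp) none = none := by
  induction p with
  | nil => rfl
  | cons b t ih => simpa using ih

lemma followPath_cons (x : GCell n m → GSym n m) (a : GCell n m) (b : Bool) (t : List Bool) :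
    followPath x a (b :: t) =
      match (if b then (x a).rp else (x a).lp) with
      | none => none
      | some c' => followPath x c' t := by
  show List.foldl _ _ _ = _
  rw [List.foldl_cons, Option.bind_some]
  cases hb : (if b then (x a).rp else (x a).lp) with
  | none => exact followPath_none x t
  | some c' => rfl

@[simp] lemma run_fpP (x) (a : GCell n m) (p : List Bool) :
    (fpP a p).run x = followPath x a p := by
  induction p generalizing a with
  | nil => rfl
  | cons b t ih =>
      rw [followPath_cons]
      show (match (if b then (x a).rp else (x a).lp) with
        | none => Prog.ret none
        | some c' => fpP c' t).run x = _
      cases hb : (if b then (x a).rp else (x a).lp) with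
      | none => simp [hb]
      | some c' => simp [hb, ih]

lemma pcost_fpP_le (x) (a : GCell n m) (p : List Bool) :
    (fpP a p).pcost x ≤ p.length := by
  induction p generalizing a with
  | nil => simp [fpP, Prog.pcost]
  | cons b t ih =>
      show (match (if b then (x a).rp else (x a).lp) with
        | none => Prog.ret none
        | some c' => fpP c' t).pcost x + 1 ≤ t.length + 1
      cases hb : (if b then (x a).rp else (x a).lp) with
      | none => simp [hb, Prog.pcost]
      | some c' => simpa [hb] using ih c'

/-- Candidate extraction for row `i` of column `j`. -/
def candCheck (j : Fin m) (i : Fin n) : Prog n m (Option (GCell n m)) :=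
  .ask (i, j) fun s =>
    match s.bp with
    | none => .ret none
    | some a => .ask a fun t =>
        .ret (if t ≠ PSym.one n m (Fin n × Fin m) ∧ t.val = true then some a else none)

/-- The run of `candCheck`. -/
def candRun (x : GCell n m → GSym n m) (j : Fin m) (i : Fin n) : Option (GCell n m) :=
  match (x (i, j)).bp with
  | none => none
  | some a =>
      if x a ≠ PSym.one n m (Fin n × Fin m) ∧ (x a).val = true then some a else none

@[simp] lemma run_candCheck (x) (j : Fin m) (i : Fin n) :
    (candCheck j i).run x = candRun x j i := by
  show (match (x (i, j)).bp with
    | none => Prog.ret none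
    | some a => Prog.ask a fun t =>
        .ret (if t ≠ PSym.one n m (Fin n × Fin m) ∧ t.val = true then some a else none)).run x = _
  cases hb : (x (i, j)).bp with
  | none => simp [candRun, hb]
  | some a => simp [candRun, hb]

/-- Pairwise elimination test. -/
def test (champ chall : GCell n m) : Prog n m Bool :=
  (fpP champ (treePath m chall.2.1)).bind fun r =>
    match r with
    | none => .ret false
    | some e =>
        if e.2 = chall.2 then .ask e fun s => .ret (!s.val) else .ret false

/-- The run of `test`. -/
def testRun (x : GCell n m → GSym n m) (champ chall : GCell n m) : Bool :=
  match followPath x champ (treePath m chall.2.1) with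
  | none => false
  | some e => if e.2 = chall.2 then !(x e).val else false

@[simp] lemma run_test (x) (champ chall : GCell n m) :
    (test champ chall).run x = testRun x champ chall := by
  unfold test testRun
  rw [Prog.run_bind, run_fpP]
  cases followPath x champ (treePath m chall.2.1) with
  | none => rfl
  | some e =>
      by_cases h : e.2 = chall.2 <;> simp [h]

/-- Tournament step. -/
def step : Option (GCell n m) → GCell n m → Prog n m (Option (GCell n m))
  | none, c => .ret (some c)
  | some champ, c => (test champ c).bind fun ok => .ret (if ok then some champ else some c)

@[simp] lemma run_step_none (x) (c : GCell n m) : (step none c).run x = some c := rfl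

@[simp] lemma run_step_some (x) (champ c : GCell n m) :
    (step (some champ) c).run x = (if testRun x champ c then some champ else some c) := by
  simp [step]

/-- Probe column `j` from candidate `a'`. -/
def probe (a' : GCell n m) (j : Fin m) : Prog n m (Option Bool) :=
  if j = a'.2 then .ret (some false)
  else (fpP a' (treePath m j.1)).bind fun r =>
    match r with
    | none => .ret none
    | some ℓ =>
        if ℓ.2 = j then
          .ask ℓ fun s => .ret (if s.val = false then some (decide (s.bp = some a')) else none)
        else .ret none

/-- The run of `probe`. -/
noncomputable def probeRun (x : GCell n m → GSym n m) (a' : GCell n m) (j : Fin m) :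
    Option Bool :=
  if j = a'.2 then some false
  else
    match followPath x a' (treePath m j.1) with
    | none => none
    | some ℓ =>
        if ℓ.2 = j then
          (if (x ℓ).val = false then some (decide ((x ℓ).bp = some a')) else none)
        else none

@[simp] lemma run_probe (x) (a' : GCell n m) (j : Fin m) :
    (probe a' j).run x = probeRun x a' j := by
  unfold probe probeRun
  by_cases hj : j = a'.2
  · simp [hj]
  · simp only [hj, if_false]
    rw [Prog.run_bind, run_fpP]
    cases followPath x a' (treePath m j.1) with
    | none => rfl
    | some ℓ => by_cases h : ℓ.2 = j <;> simp [h]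

/-- Check one cell of the candidate's column. -/
def colCheck (a' : GCell n m) (i : Fin n) : Prog n m Bool :=
  .ask (i, a'.2) fun s =>
    .ret (decide (if (i, a'.2) = a' then
      s ≠ PSym.one n m (Fin n × Fin m) ∧ s.val = true else s = PSym.one n m (Fin n × Fin m)))

@[simp] lemma run_colCheck (x) (a' : GCell n m) (i : Fin n) :
    (colCheck a' i).run x = decide (if (i, a'.2) = a' then
      x (i, a'.2) ≠ PSym.one n m (Fin n × Fin m) ∧ (x (i, a'.2)).val = true
      else x (i, a'.2) = PSym.one n m (Fin n × Fin m)) := rfl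

/-- Full verification of a candidate special element. -/
def verify (a' : GCell n m) : Prog n m Bool :=
  (Prog.listM (colCheck a') (List.finRange n)).bind fun oks =>
  (Prog.listM (probe a') (List.finRange m)).bind fun ps =>
  .ret (oks.all id && ps.all Option.isSome && (ps.count (some true) == m / 2))

/-- The full algorithm for sampled column `j`. -/
def alg (j : Fin m) : Prog n m Bool :=
  (Prog.listM (candCheck j) (List.finRange n)).bind fun cs =>
  (Prog.foldM step cs.reduceOption none).bind fun champ =>
  match champ with
  | none => .ret false
  | some a' => verify a'

end GAlg

namespace GAlg

variable {n m : ℕ}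

/-- Counting helper: counting `some true` in the probe list equals a filter cardinality. -/
lemma count_map_finRange (f : Fin m → Option Bool) :
    ((List.finRange m).map f).count (some true) =
      (Finset.univ.filter fun j => f j = some true).card := by
  have h1 : ∀ l : List (Fin m), (l.map f).count (some true) =
      l.countP fun a => f a == some true := by
    intro l
    induction l with
    | nil => rfl
    | cons a t ih => simp [List.count_cons, List.countP_cons, ih]
  rw [h1, List.countP_eq_length_filter,
    show Finset.univ.filter (fun j => f j = some true) =
      ((List.finRange m).filter fun a => f a == some true).toFinset by ext j; simp,
    List.toFinset_card_of_nodup ((List.nodup_finRange m).filter _)]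

lemma ncard_setOf_fin (p : Fin m → Prop) [DecidablePred p] :
    {j : Fin m | p j}.ncard = (Finset.univ.filter p).card := by
  have : {j : Fin m | p j} = ↑(Finset.univ.filter p) := by ext j; simp
  rw [this, Set.ncard_coe_finset]

lemma run_verify_iff (x : GCell n m → GSym n m) (a' : GCell n m) :
    (verify a').run x = true ↔
      (∀ i : Fin n, if (i, a'.2) = a' then
          x (i, a'.2) ≠ PSym.one n m (Fin n × Fin m) ∧ (x (i, a'.2)).val = true
        else x (i, a'.2) = PSym.one n m (Fin n × Fin m)) ∧
      (∀ j : Fin m, (probeRun x a' j).isSome = true) ∧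
      ((List.finRange m).map (probeRun x a')).count (some true) = m / 2 := by
  simp only [verify, Prog.run_bind, Prog.run_ret, Prog.run_listM, run_colCheck, run_probe,
    Bool.and_eq_true, beq_iff_eq, List.all_map, List.all_eq_true, List.mem_finRange,
    decide_eq_true_eq, Function.comp, id, and_assoc]
  constructor
  · rintro ⟨hA, hB, hC⟩
    refine ⟨fun i => ?_, fun j => ?_, hC⟩
    · exact hA i (by simp)
    · exact hB j (by simp)
  · rintro ⟨hA, hB, hC⟩
    refine ⟨?_, ?_, hC⟩
    · intro y hy
      exact hA y
    · intro y hy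
      exact hB y

lemma probe_isSome_elim (x : GCell n m → GSym n m) (a' : GCell n m) (j : Fin m)
    (hj : j ≠ a'.2) (h : (probeRun x a' j).isSome = true) :
    ∃ ℓ, followPath x a' (treePath m j.1) = some ℓ ∧ ℓ.2 = j ∧ (x ℓ).val = false ∧
      probeRun x a' j = some (decide ((x ℓ).bp = some a')) := by
  unfold probeRun at h ⊢
  rw [if_neg hj] at h ⊢
  cases hfp : followPath x a' (treePath m j.1) with
  | none => rw [hfp] at h; simp at h
  | some ℓ =>
      rw [hfp] at h
      by_cases h2 : ℓ.2 = j
      · by_cases h3 : (x ℓ).val = false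
        · exact ⟨ℓ, rfl, h2, h3, by simp [h2, h3]⟩
        · simp [h2, h3] at h
      · simp [h2] at h

/-- Under the all-probes-defined hypothesis, the `G`-set equals the probe-true set. -/
lemma gset_eq (x : GCell n m → GSym n m) (a' : GCell n m)
    (h2 : ∀ j : Fin m, (probeRun x a' j).isSome = true) :
    ∀ j : Fin m, (j ≠ a'.2 ∧ ∃ ℓ, followPath x a' (treePath m j.1) = some ℓ ∧
        (x ℓ).bp = some a') ↔ probeRun x a' j = some true := by
  intro j
  constructor
  · rintro ⟨hj, ℓ, hfp, hbp⟩
    obtain ⟨ℓ', hfp', -, -, hpr⟩ := probe_isSome_elim x a' j hj (h2 j)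
    rw [hfp'] at hfp
    cases hfp
    rw [hpr, hbp]
    simp
  · intro hp
    by_cases hj : j = a'.2
    · exfalso
      unfold probeRun at hp
      rw [if_pos hj] at hp
      simp at hp
    · obtain ⟨ℓ, hfp, -, -, hpr⟩ := probe_isSome_elim x a' j hj (h2 j)
      rw [hpr] at hp
      refine ⟨hj, ℓ, hfp, ?_⟩
      have := Option.some_injective _ hp
      exact of_decide_eq_true this

lemma verify_sound (x : GCell n m → GSym n m) (a' : GCell n m)
    (h : (verify a').run x = true) : gCond n m x a'.2 a' := by
  obtain ⟨h1, h2, h3⟩ := (run_verify_iff x a').mp h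
  have hprobe : ∀ j : Fin m, j ≠ a'.2 →
      ∃ ℓ, followPath x a' (treePath m j.1) = some ℓ ∧ ℓ.2 = j ∧ (x ℓ).val = false := by
    intro j hj
    obtain ⟨ℓ, hfp, hl2, hv, -⟩ := probe_isSome_elim x a' j hj (h2 j)
    exact ⟨ℓ, hfp, hl2, hv⟩
  refine ⟨?_, rfl, ?_, ?_, ?_⟩
  · intro j
    constructor
    · intro hall
      by_contra hj
      obtain ⟨ℓ, -, hl2, hv⟩ := hprobe j hj
      have := hall ℓ.1
      rw [show ((ℓ.1, j) : GCell n m) = ℓ from Prod.ext rfl hl2.symm] at this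
      simp [this] at hv
    · rintro rfl
      intro i
      have := h1 i
      by_cases hia : ((i, a'.2) : GCell n m) = a'
      · rw [if_pos hia] at this; exact this.2
      · rw [if_neg hia] at this; rw [this]; rfl
  · intro i
    have := h1 i
    constructor
    · intro hne
      by_cases hia : ((i, a'.2) : GCell n m) = a'
      · exact hia
      · rw [if_neg hia] at this; exact absurd this hne
    · intro hia
      rw [if_pos hia] at this; exact this.1
  · exact hprobe
  · rw [ncard_setOf_fin]
    rw [count_map_finRange] at h3
    rw [← h3]
    congr 1
    ext j
    simp only [Finset.mem_filter, Finset.mem_univ, true_and]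
    exact gset_eq x a' h2 j

end GAlg

namespace GAlg

variable {n m : ℕ}

lemma verify_complete (x : GCell n m → GSym n m) (b : Fin m) (a : GCell n m)
    (hg : gCond n m x b a) : (verify a).run x = true := by
  obtain ⟨C1, hab, C3, C4, C5⟩ := hg
  subst hab
  have H2 : ∀ j : Fin m, (probeRun x a j).isSome = true := by
    intro j
    by_cases hj : j = a.2
    · simp [probeRun, hj]
    · obtain ⟨ℓ, hfp, hl2, hval⟩ := C4 j hj
      simp [probeRun, hj, hfp, hl2, hval]
  rw [run_verify_iff]
  refine ⟨fun i => ?_, H2, ?_⟩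
  · by_cases hia : ((i, a.2) : GCell n m) = a
    · rw [if_pos hia]
      exact ⟨(C3 i).mpr hia, (C1 a.2).mpr rfl i⟩
    · rw [if_neg hia]
      by_contra h'
      exact hia ((C3 i).mp h')
  · rw [count_map_finRange]
    have hset : {j : Fin m | probeRun x a j = some true} =
        {j : Fin m | j ≠ a.2 ∧ ∃ ℓ : Fin n × Fin m,
          followPath x a (treePath m j.1) = some ℓ ∧ (x ℓ).bp = some a} := by
      ext j
      exact (gset_eq x a H2 j).symm
    rw [← ncard_setOf_fin, hset]
    exact C5

/-- Properties of candidates. -/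
lemma mem_cands (x : GCell n m → GSym n m) (j : Fin m) (c : GCell n m)
    (h : c ∈ ((List.finRange n).map (candRun x j)).reduceOption) :
    x c ≠ PSym.one n m (Fin n × Fin m) ∧ (x c).val = true := by
  rw [List.reduceOption_mem_iff, List.mem_map] at h
  obtain ⟨i, -, hi⟩ := h
  unfold candRun at hi
  cases hb : (x (i, j)).bp with
  | none => rw [hb] at hi; simp at hi
  | some a'' =>
      rw [hb] at hi
      have hred : (match some a'' with
          | none => none
          | some a => if x a ≠ PSym.one n m (Fin n × Fin m) ∧ (x a).val = true
              then some a else none) = (if x a'' ≠ PSym.one n m (Fin n × Fin m) ∧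
              (x a'').val = true then some a'' else (none : Option (GCell n m))) := rfl
      rw [hred] at hi
      by_cases hcond : x a'' ≠ PSym.one n m (Fin n × Fin m) ∧ (x a'').val = true
      · rw [if_pos hcond] at hi
        cases hi
        exact hcond
      · rw [if_neg hcond] at hi; simp at hi

/-- The pure tournament step. -/
def stepRun (x : GCell n m → GSym n m) : Option (GCell n m) → GCell n m → Option (GCell n m)
  | none, c => some c
  | some champ, c => if testRun x champ c then some champ else some c

@[simp] lemma stepRun_none (x : GCell n m → GSym n m) (c : GCell n m) :
    stepRun x none c = some c := rfl

@[simp] lemma stepRun_some (x : GCell n m → GSym n m) (champ c : GCell n m) :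
    stepRun x (some champ) c = if testRun x champ c then some champ else some c := rfl

lemma run_foldM_step (x : GCell n m → GSym n m) (l : List (GCell n m))
    (o : Option (GCell n m)) :
    (Prog.foldM step l o).run x = l.foldl (stepRun x) o := by
  rw [Prog.run_foldM]
  congr 1
  funext o c
  cases o with
  | none => rfl
  | some champ => simp [stepRun]

section Tournament

variable (x : GCell n m → GSym n m) (b : Fin m) (a : GCell n m)

/-- The test from the true special element succeeds against non-marked columns. -/
lemma test_from_a (hg : gCond n m x b a) (c : GCell n m) (hc : c.2 ≠ b) :
    testRun x a c = true := by
  obtain ⟨ℓ, hfp, hl2, hval⟩ := hg.2.2.2.1 c.2 hc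
  unfold testRun
  rw [hfp]
  show (if ℓ.2 = c.2 then !(x ℓ).val else false) = true
  rw [if_pos hl2, hval]
  rfl

/-- No test towards the true special element can succeed. -/
lemma test_to_a (hg : gCond n m x b a) (champ : GCell n m) :
    testRun x champ a = false := by
  have hvalb : ∀ e : GCell n m, e.2 = b → (x e).val = true := by
    intro e he
    have := (hg.1 b).mpr rfl e.1
    rwa [show ((e.1, b) : GCell n m) = e from Prod.ext rfl he.symm] at this
  unfold testRun
  cases hfp : followPath x champ (treePath m a.2.1) with
  | none => rfl
  | some e =>
      show (if e.2 = a.2 then !(x e).val else false) = false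
      by_cases h2 : e.2 = a.2
      · rw [if_pos h2, hvalb e (h2.trans hg.2.1)]
        rfl
      · rw [if_neg h2]

lemma tournament (hg : gCond n m x b a) (l : List (GCell n m))
    (hl : ∀ c ∈ l, x c ≠ PSym.one n m (Fin n × Fin m) ∧ (x c).val = true) :
    ∀ o : Option (GCell n m), (o = some a ∨ a ∈ l) → l.foldl (stepRun x) o = some a := by
  have hcolb : ∀ c : GCell n m, c.2 = b → x c ≠ PSym.one n m (Fin n × Fin m) → c = a := by
    intro c hc2 hcne
    have := (hg.2.2.1 c.1).mp (by rwa [show ((c.1, b) : GCell n m) = c from Prod.ext rfl hc2.symm])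
    rwa [show ((c.1, b) : GCell n m) = c from Prod.ext rfl hc2.symm] at this
  induction l with
  | nil =>
      rintro o (rfl | h)
      · rfl
      · exact absurd h List.not_mem_nil
  | cons c t ih =>
      rintro o (rfl | hmem)
      · -- champion is `a`
        rw [List.foldl_cons]
        apply ih (fun c hc => hl c (List.mem_cons_of_mem _ hc))
        left
        show stepRun x (some a) c = some a
        by_cases hc2 : c.2 = b
        · have hca : c = a := hcolb c hc2 (hl c List.mem_cons_self).1
          subst hca
          rw [stepRun_some]
          split <;> rfl
        · rw [stepRun_some, test_from_a x b a hg c hc2, if_pos rfl]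
      · rw [List.foldl_cons]
        rcases List.mem_cons.mp hmem with rfl | hmt
        · -- challenger is `a`
          apply ih (fun c hc => hl c (List.mem_cons_of_mem _ hc))
          left
          cases o with
          | none => rfl
          | some champ =>
              rw [stepRun_some, test_to_a x b a hg champ, if_neg (by simp)]
        · apply ih (fun c hc => hl c (List.mem_cons_of_mem _ hc))
          right
          exact hmt

end Tournament

lemma gFun_eq_true_iff (x : Fin n × Fin m → PSym n m (Fin n × Fin m)) :
    gFun n m x = true ↔ ∃ b a, gCond n m x b a := by
  by_cases h : ∃ b a, gCond n m x b a <;> simp [gFun, h]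

/-- Soundness of the algorithm. -/
lemma alg_sound (x : GCell n m → GSym n m) (j : Fin m) (h : (alg j).run x = true) :
    gFun n m x = true := by
  rw [gFun_eq_true_iff]
  unfold alg at h
  rw [Prog.run_bind, Prog.run_bind] at h
  set champ := (Prog.foldM step ((Prog.listM (candCheck j) (List.finRange n)).run x).reduceOption
    none).run x with hch
  cases hc : champ with
  | none => rw [hc] at h; simp [Prog.run] at h
  | some a' =>
      rw [hc] at h
      exact ⟨a'.2, a', verify_sound x a' h⟩

/-- Completeness of the algorithm on good columns. -/
lemma alg_complete (x : GCell n m → GSym n m) (b : Fin m) (a : GCell n m)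
    (hg : gCond n m x b a) (j : Fin m) (hj : j ≠ b) (ℓ : Fin n × Fin m)
    (hfp : followPath x a (treePath m j.1) = some ℓ) (hbp : (x ℓ).bp = some a) :
    (alg j).run x = true := by
  unfold alg
  rw [Prog.run_bind, Prog.run_bind, Prog.run_listM]
  have hrun : ∀ i : Fin n, (candCheck (n := n) j i).run x = candRun x j i := run_candCheck x j
  have hmap : (List.finRange n).map (fun i => (candCheck (n := n) j i).run x)
      = (List.finRange n).map (candRun x j) := by
    simp only [run_candCheck]
  rw [hmap, run_foldM_step]
  have hxa_ne : x a ≠ PSym.one n m (Fin n × Fin m) := by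
    have h1 := (hg.2.2.1 a.1).mpr (Prod.ext rfl hg.2.1.symm)
    rwa [show ((a.1, b) : GCell n m) = a from Prod.ext rfl hg.2.1.symm] at h1
  have hxa_val : (x a).val = true := by
    have h1 := (hg.1 b).mpr rfl a.1
    rwa [show ((a.1, b) : GCell n m) = a from Prod.ext rfl hg.2.1.symm] at h1
  have hain : a ∈ ((List.finRange n).map (candRun x j)).reduceOption := by
    rw [List.reduceOption_mem_iff, List.mem_map]
    refine ⟨ℓ.1, List.mem_finRange _, ?_⟩
    obtain ⟨ℓ', hfp', hl2', hval'⟩ := hg.2.2.2.1 j hj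
    have hll : ℓ' = ℓ := Option.some_injective _ (hfp'.symm.trans hfp)
    subst hll
    unfold candRun
    rw [show ((ℓ'.1, j) : GCell n m) = ℓ' from Prod.ext rfl hl2'.symm, hbp]
    show (if x a ≠ PSym.one n m (Fin n × Fin m) ∧ (x a).val = true
      then some a else (none : Option (GCell n m))) = some a
    rw [if_pos ⟨hxa_ne, hxa_val⟩]
  rw [tournament x b a hg _ (fun c hc => mem_cands x j c hc) none (Or.inr hain)]
  exact verify_complete x b a hg

end GAlg

namespace GAlg

variable {n m : ℕ}

lemma length_treePath_le (m j : ℕ) : (treePath m j).length ≤ Nat.log 2 m + 1 := by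
  have hb : ∀ k i : ℕ, (bitsPath k i).length = k := by
    intro k i; simp [bitsPath]
  unfold treePath
  split
  · rw [hb]; omega
  · split
    · simp [hb]
    · rw [hb]; omega

lemma pcost_fpP_tree_le (x : GCell n m → GSym n m) (a : GCell n m) (j : ℕ) :
    (fpP a (treePath m j)).pcost x ≤ Nat.log 2 m + 1 :=
  le_trans (pcost_fpP_le x a _) (length_treePath_le m j)

lemma pcost_candCheck_le (x : GCell n m → GSym n m) (j : Fin m) (i : Fin n) :
    (candCheck j i).pcost x ≤ 2 := by
  show (match (x (i, j)).bp with
    | none => Prog.ret none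
    | some a => Prog.ask a fun t =>
        .ret (if t ≠ PSym.one n m (Fin n × Fin m) ∧ t.val = true then some a
          else none)).pcost x + 1 ≤ 2
  cases hb : (x (i, j)).bp <;> simp [Prog.pcost]

lemma pcost_test_le (x : GCell n m → GSym n m) (champ chall : GCell n m) :
    (test champ chall).pcost x ≤ Nat.log 2 m + 2 := by
  unfold test
  rw [Prog.pcost_bind]
  have h1 := pcost_fpP_tree_le x champ (chall.2.1 : ℕ)
  have h2 : (match (fpP champ (treePath m chall.2.1)).run x with
      | none => Prog.ret false
      | some e => if e.2 = chall.2 then Prog.ask e fun s => Prog.ret (!s.val)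
          else Prog.ret false).pcost x ≤ 1 := by
    cases (fpP champ (treePath m chall.2.1)).run x with
    | none => simp [Prog.pcost]
    | some e =>
        by_cases h : e.2 = chall.2 <;> simp [h, Prog.pcost]
  omega

lemma pcost_step_le (x : GCell n m → GSym n m) (o : Option (GCell n m)) (c : GCell n m) :
    (step o c).pcost x ≤ Nat.log 2 m + 2 := by
  cases o with
  | none => simp [step, Prog.pcost]
  | some champ =>
      show ((test champ c).bind fun ok => .ret (if ok then some champ else some c)).pcost x ≤ _
      rw [Prog.pcost_bind]
      have := pcost_test_le x champ c
      simp only [Prog.pcost]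
      omega

lemma pcost_probe_le (x : GCell n m → GSym n m) (a' : GCell n m) (j : Fin m) :
    (probe a' j).pcost x ≤ Nat.log 2 m + 2 := by
  unfold probe
  split
  · simp [Prog.pcost]
  · rw [Prog.pcost_bind]
    have h1 := pcost_fpP_tree_le x a' (j.1 : ℕ)
    have h2 : (match (fpP a' (treePath m j.1)).run x with
        | none => Prog.ret none
        | some ℓ =>
            if ℓ.2 = j then
              Prog.ask ℓ fun s =>
                Prog.ret (if s.val = false then some (decide (s.bp = some a')) else none)
            else Prog.ret none).pcost x ≤ 1 := by
      cases (fpP a' (treePath m j.1)).run x with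
      | none => simp [Prog.pcost]
      | some ℓ => by_cases h : ℓ.2 = j <;> simp [h, Prog.pcost]
    omega

lemma pcost_colCheck_le (x : GCell n m → GSym n m) (a' : GCell n m) (i : Fin n) :
    (colCheck a' i).pcost x ≤ 1 := by
  simp [colCheck, Prog.pcost]

lemma pcost_verify_le (x : GCell n m → GSym n m) (a' : GCell n m) :
    (verify a').pcost x ≤ n + m * (Nat.log 2 m + 2) := by
  unfold verify
  rw [Prog.pcost_bind, Prog.pcost_bind]
  have h1 : (Prog.listM (colCheck a') (List.finRange n)).pcost x ≤ n * 1 := by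
    have := Prog.pcost_listM_le x (colCheck a') (List.finRange n) 1
      (fun i _ => pcost_colCheck_le x a' i)
    simpa using this
  have h2 : (Prog.listM (probe a') (List.finRange m)).pcost x ≤ m * (Nat.log 2 m + 2) := by
    have := Prog.pcost_listM_le x (probe a') (List.finRange m) (Nat.log 2 m + 2)
      (fun j _ => pcost_probe_le x a' j)
    simpa using this
  simp only [Prog.pcost]
  omega

lemma pcost_alg_le (x : GCell n m → GSym n m) (j : Fin m) :
    (alg j).pcost x ≤ (n + m) * (Nat.log 2 m + 6) := by
  unfold alg
  rw [Prog.pcost_bind, Prog.pcost_bind]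
  have h1 : (Prog.listM (candCheck j) (List.finRange n)).pcost x ≤ n * 2 := by
    have := Prog.pcost_listM_le x (candCheck j) (List.finRange n) 2
      (fun i _ => pcost_candCheck_le x j i)
    simpa using this
  set cs := ((Prog.listM (candCheck j) (List.finRange n)).run x).reduceOption with hcs
  have hlen : cs.length ≤ n := by
    calc cs.length ≤ ((Prog.listM (candCheck j) (List.finRange n)).run x).length :=
          List.reduceOption_length_le _
      _ = n := by simp
  have h2 : (Prog.foldM step cs none).pcost x ≤ n * (Nat.log 2 m + 2) := by
    calc (Prog.foldM step cs none).pcost x ≤ cs.length * (Nat.log 2 m + 2) :=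
          Prog.pcost_foldM_le x step cs _ (fun b a _ => pcost_step_le x b a) none
      _ ≤ n * (Nat.log 2 m + 2) := Nat.mul_le_mul_right _ hlen
  have h3 : (match (Prog.foldM step cs none).run x with
      | none => Prog.ret false
      | some a' => verify a').pcost x ≤ n + m * (Nat.log 2 m + 2) := by
    cases (Prog.foldM step cs none).run x with
    | none => simp [Prog.pcost]
    | some a' => exact pcost_verify_le x a'
  have hL : 0 ≤ Nat.log 2 m := Nat.zero_le _
  nlinarith [h1, h2, h3]

end GAlg
/-- `R1(g_{n,m}) = Õ(n + m)`. -/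
theorem statement8 :
    ∃ C d : ℝ, 0 < C ∧ 0 < d ∧ ∀ n m : ℕ, 2 ≤ n → 2 ≤ m → Even m →
      R1query (gFun n m) ≤
        ENNReal.ofReal (C * ((n : ℝ) + m) * Real.logb 2 ((n : ℝ) + m) ^ d) := by
  refine ⟨16, 1, by norm_num, by norm_num, fun n m hn hm hev => ?_⟩
  haveI : Nonempty (Fin m) := ⟨⟨0, by omega⟩⟩
  set tree : Fin m → DTree (GCell n m) (GSym n m) := fun j => (GAlg.alg j).toTree with htree
  set u := PMF.uniformOfFintype (Fin m) with hu
  set μ := u.map tree with hμ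
  set B : ℕ := (n + m) * (Nat.log 2 m + 6) with hB
  have hUB : ∀ x : GCell n m → GSym n m, ∀ j, (tree j).cost x ≤ B := by
    intro x j
    rw [htree]
    rw [Prog.cost_toTree]
    exact GAlg.pcost_alg_le x j
  have hEval : ∀ (x : GCell n m → GSym n m) (j : Fin m),
      (tree j).eval x = (GAlg.alg j).run x := fun x j => Prog.eval_toTree _ x
  have hsupp : ∀ T ∈ μ.support, ∃ j, T = tree j := by
    intro T hT
    rw [hμ, PMF.support_map] at hT
    obtain ⟨j, -, rfl⟩ := hT
    exact ⟨j, rfl⟩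
  -- membership in the one-sided error set
  have hmem : μ ∈ {ν : PMF (DTree (GCell n m) (GSym n m)) |
      (∀ x, gFun n m x = false → ∀ T ∈ ν.support, T.eval x = false) ∧
      (∀ x, gFun n m x = true →
        1 / 2 ≤ ∑' T : DTree (GCell n m) (GSym n m), if T.eval x = true then ν T else 0)} := by
    constructor
    · intro x hx T hT
      obtain ⟨j, rfl⟩ := hsupp T hT
      rw [hEval]
      by_contra hc
      rw [Bool.not_eq_false] at hc
      have := GAlg.alg_sound x j hc
      simp [hx] at this
    · intro x hx
      obtain ⟨b, a, hg⟩ := (GAlg.gFun_eq_true_iff x).mp hx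
      classical
      set pS : Fin m → Prop := fun j => j ≠ b ∧ ∃ ℓ : Fin n × Fin m,
        followPath x a (treePath m j.1) = some ℓ ∧ (x ℓ).bp = some a with hpS
      have hcard : (Finset.univ.filter pS).card = m / 2 := by
        rw [← GAlg.ncard_setOf_fin pS]
        exact hg.2.2.2.2
      have hgood : ∀ j, pS j → (tree j).eval x = true := by
        intro j hj
        rw [hEval]
        obtain ⟨hjb, ℓ, hfp, hbp⟩ := hj
        exact GAlg.alg_complete x b a hg j hjb ℓ hfp hbp
      have hSum : (∑' T : DTree (GCell n m) (GSym n m), if T.eval x = true then μ T else 0)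
          = ∑ j : Fin m, if (tree j).eval x = true then u j else 0 := by
        calc (∑' T : DTree (GCell n m) (GSym n m), if T.eval x = true then μ T else 0)
            = ∑' T : DTree (GCell n m) (GSym n m), ∑' j : Fin m,
                if T.eval x = true then (if T = tree j then u j else 0) else 0 := by
              refine tsum_congr fun T => ?_
              by_cases h : T.eval x = true
              · simp only [h, if_true, hμ, PMF.map_apply]
              · simp [h]
          _ = ∑' j : Fin m, ∑' T : DTree (GCell n m) (GSym n m),
                if T.eval x = true then (if T = tree j then u j else 0) else 0 :=
              ENNReal.tsum_comm
          _ = ∑' j : Fin m, if (tree j).eval x = true then u j else 0 := by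
              refine tsum_congr fun j => ?_
              refine (tsum_eq_single (tree j) fun T hT => ?_).trans (by simp)
              by_cases h : T.eval x = true <;> simp [h, hT]
          _ = ∑ j : Fin m, if (tree j).eval x = true then u j else 0 := tsum_fintype _
      rw [hSum]
      have huval : ∀ j : Fin m, u j = (m : ℝ≥0∞)⁻¹ := by
        intro j
        rw [hu, PMF.uniformOfFintype_apply, Fintype.card_fin]
      obtain ⟨k, hk⟩ := hev
      have hm2 : m / 2 = k := by omega
      have hk0 : (k : ℝ≥0∞) ≠ 0 := by
        have : k ≠ 0 := by omega
        exact_mod_cast this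
      have hhalf : ((m / 2 : ℕ) : ℝ≥0∞) * (m : ℝ≥0∞)⁻¹ = 1 / 2 := by
        rw [hm2, show (m : ℝ≥0∞) = 2 * k by rw [hk]; push_cast; ring]
        rw [ENNReal.mul_inv (Or.inl (by norm_num)) (Or.inl (by norm_num))]
        rw [show (k : ℝ≥0∞) * ((2 : ℝ≥0∞)⁻¹ * (k : ℝ≥0∞)⁻¹)
            = (k : ℝ≥0∞) * (k : ℝ≥0∞)⁻¹ * (2 : ℝ≥0∞)⁻¹ by ring]
        rw [ENNReal.mul_inv_cancel hk0 (ENNReal.natCast_ne_top k), one_mul, one_div]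
      calc (1 : ℝ≥0∞) / 2 = ((m / 2 : ℕ) : ℝ≥0∞) * (m : ℝ≥0∞)⁻¹ := hhalf.symm
        _ = ∑ _j ∈ Finset.univ.filter pS, (m : ℝ≥0∞)⁻¹ := by
            rw [Finset.sum_const, hcard, nsmul_eq_mul]
        _ = ∑ j ∈ Finset.univ.filter pS, (if (tree j).eval x = true then u j else 0) := by
            refine Finset.sum_congr rfl fun j hj => ?_
            rw [Finset.mem_filter] at hj
            rw [if_pos (hgood j hj.2), huval j]
        _ ≤ ∑ j : Fin m, if (tree j).eval x = true then u j else 0 :=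
            Finset.sum_le_sum_of_subset (Finset.filter_subset _ _)
  -- the expected cost bound
  have hcost : (⨆ x : GCell n m → GSym n m, expCost μ x) ≤ (B : ℝ≥0∞) := by
    refine iSup_le fun x => ?_
    unfold expCost
    calc (∑' T : DTree (GCell n m) (GSym n m), μ T * (T.cost x : ℝ≥0∞))
        ≤ ∑' T : DTree (GCell n m) (GSym n m), μ T * (B : ℝ≥0∞) := by
          refine ENNReal.tsum_le_tsum fun T => ?_
          by_cases hT : T ∈ μ.support
          · obtain ⟨j, rfl⟩ := hsupp T hT
            exact mul_le_mul_right (by exact_mod_cast hUB x j) _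
          · have h0 : μ T = 0 := by rwa [PMF.mem_support_iff, not_not] at hT
            simp [h0]
      _ = (B : ℝ≥0∞) := by
          rw [ENNReal.tsum_mul_right, PMF.tsum_coe, one_mul]
  have hfinal : R1query (gFun n m) ≤ (B : ℝ≥0∞) :=
    le_trans (iInf₂_le μ hmem) hcost
  refine le_trans hfinal ?_
  -- numeric bound
  rw [Real.rpow_one]
  rw [show ((B : ℝ≥0∞)) = ENNReal.ofReal (B : ℝ) from (ENNReal.ofReal_natCast B).symm]
  refine ENNReal.ofReal_le_ofReal ?_
  have hΛ4 : (4 : ℝ) ≤ (n : ℝ) + m := by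
    nlinarith [show (2:ℝ) ≤ (n:ℝ) from by exact_mod_cast hn, show (2:ℝ) ≤ (m:ℝ) from by exact_mod_cast hm]
  have hΛ2 : (2 : ℝ) ≤ Real.logb 2 ((n : ℝ) + m) := by
    have h4 : Real.logb 2 (4 : ℝ) = 2 := by
      rw [show (4:ℝ) = 2 ^ (2:ℕ) by norm_num, Real.logb_pow,
        Real.logb_self_eq_one (by norm_num)]
      norm_num
    calc (2:ℝ) = Real.logb 2 4 := h4.symm
      _ ≤ Real.logb 2 ((n:ℝ) + m) :=
          Real.logb_le_logb_of_le (by norm_num) (by norm_num) hΛ4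
  have hlogm : (Nat.log 2 m : ℝ) ≤ Real.logb 2 ((n : ℝ) + m) := by
    calc (Nat.log 2 m : ℝ) ≤ Real.logb 2 m := Real.natLog_le_logb m 2
      _ ≤ Real.logb 2 ((n:ℝ) + m) := by
          apply Real.logb_le_logb_of_le (by norm_num)
            (by exact_mod_cast Nat.lt_of_lt_of_le Nat.zero_lt_two hm)
          nlinarith [show (0:ℝ) ≤ (n:ℝ) from by positivity]
  have hBle : (B : ℝ) ≤ 16 * ((n : ℝ) + m) * Real.logb 2 ((n : ℝ) + m) := by
    rw [hB]
    push_cast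
    set Λ := Real.logb 2 ((n : ℝ) + m)
    have h1 : (Nat.log 2 m : ℝ) + 6 ≤ 4 * Λ := by nlinarith
    have h2 : (0:ℝ) ≤ (n:ℝ) + m := by positivity
    nlinarith
  exact hBle
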